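/- Let G ≤ Aut(S) be a finite abelian subgroup of the group of graded automorphisms of the weighted polynomial ring S. Then G is diagonalizable: there exists γ ∈ Aut(S) such that every element of γGγ⁻¹ maps each variable x_i to a scalar multiple of x_i. -/

import Mathlib

open MvPolynomial

noncomputable section

/-- The predicate that an algebra automorphism of `ℂ[x_0,…,x_{n+1}]` is graded with
respect to the weights `a`, i.e. preserves all weighted-homogeneous pieces. -/
def IsGradedAut {n : ℕ} (a : Fin (n + 2) → ℕ)
    (φ : MvPolynomial (Fin (n + 2)) ℂ ≃ₐ[ℂ] MvPolynomial (Fin (n + 2)) ℂ) : Prop :=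
  ∀ (d : ℕ) (f : MvPolynomial (Fin (n + 2)) ℂ),
    f.IsWeightedHomogeneous a d ↔ (φ f).IsWeightedHomogeneous a d

lemma IsGradedAut.one {n : ℕ} (a : Fin (n + 2) → ℕ) : IsGradedAut a 1 := by
  intro d f
  rfl

lemma IsGradedAut.mul {n : ℕ} {a : Fin (n + 2) → ℕ}
    {φ ψ : MvPolynomial (Fin (n + 2)) ℂ ≃ₐ[ℂ] MvPolynomial (Fin (n + 2)) ℂ}
    (hφ : IsGradedAut a φ) (hψ : IsGradedAut a ψ) : IsGradedAut a (φ * ψ) := by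
  intro d f
  rw [AlgEquiv.mul_apply]
  exact (hψ d f).trans (hφ d (ψ f))

lemma IsGradedAut.inv {n : ℕ} {a : Fin (n + 2) → ℕ}
    {φ : MvPolynomial (Fin (n + 2)) ℂ ≃ₐ[ℂ] MvPolynomial (Fin (n + 2)) ℂ}
    (hφ : IsGradedAut a φ) : IsGradedAut a φ⁻¹ := by
  intro d f
  have h := hφ d (φ⁻¹ f)
  rw [show φ (φ⁻¹ f) = f from φ.apply_symm_apply f] at h
  exact h.symm

/-- The group of graded automorphisms `Aut(S)`. -/
def gradedAut {n : ℕ} (a : Fin (n + 2) → ℕ) :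
    Subgroup (MvPolynomial (Fin (n + 2)) ℂ ≃ₐ[ℂ] MvPolynomial (Fin (n + 2)) ℂ) where
  carrier := {φ | IsGradedAut a φ}
  one_mem' := IsGradedAut.one a
  mul_mem' hφ hψ := hφ.mul hψ
  inv_mem' hφ := hφ.inv


namespace DiagAux

variable {n : ℕ}

abbrev S (n : ℕ) := MvPolynomial (Fin (n + 2)) ℂ

/-- positive weight of a nonzero exponent. -/
lemma weight_pos (a : Fin (n + 2) → ℕ) (ha : ∀ i, 0 < a i) {ψ : Fin (n + 2) →₀ ℕ}
    (hψ : ψ ≠ 0) : 0 < Finsupp.weight a ψ := by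
  obtain ⟨j, hj⟩ := Finsupp.support_nonempty_iff.mpr hψ
  rw [Finsupp.weight_apply]
  refine Finset.sum_pos' (fun i _ => Nat.zero_le _) ⟨j, hj, ?_⟩
  have := Finsupp.mem_support_iff.mp hj
  simpa [smul_eq_mul] using Nat.mul_pos (Nat.pos_of_ne_zero this) (ha j)

lemma weight_single' (a : Fin (n + 2) → ℕ) (j : Fin (n + 2)) :
    Finsupp.weight a (Finsupp.single j 1) = a j := by
  simp [Finsupp.weight_apply, Finsupp.sum_single_index]

/-- a nonzero exponent which is not a single variable splits off a single variable. -/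
lemma exists_split {ψ : Fin (n + 2) →₀ ℕ} (h0 : ψ ≠ 0)
    (h1 : ∀ j, ψ ≠ Finsupp.single j 1) :
    ∃ j0 ψ', ψ = Finsupp.single j0 1 + ψ' ∧ ψ' ≠ 0 := by
  obtain ⟨j0, hj0⟩ := Finsupp.support_nonempty_iff.mpr h0
  have hpos : 1 ≤ ψ j0 := Nat.pos_of_ne_zero (Finsupp.mem_support_iff.mp hj0)
  refine ⟨j0, ψ - Finsupp.single j0 1, ?_, ?_⟩
  · ext k
    by_cases hk : k = j0
    · subst hk
      simp [Finsupp.single_apply, Nat.add_sub_cancel' hpos]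
    · simp [Finsupp.single_apply, Ne.symm hk, hk]
  · intro hc
    apply h1 j0
    have : ψ = Finsupp.single j0 1 + (ψ - Finsupp.single j0 1) := by
      ext k
      by_cases hk : k = j0
      · subst hk
        simp [Finsupp.single_apply, Nat.add_sub_cancel' hpos]
      · simp [Finsupp.single_apply, Ne.symm hk, hk]
    rw [hc, add_zero] at this
    exact this

/-- linear coefficient of a product of two polynomials with zero constant term. -/
lemma coeff_single_mul_zero {p q : S n} (j : Fin (n + 2))
    (hp : constantCoeff p = 0) (hq : constantCoeff q = 0) :
    coeff (Finsupp.single j 1) (p * q) = 0 := by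
  rw [coeff_mul]
  refine Finset.sum_eq_zero ?_
  rintro ⟨u, v⟩ huv
  rw [Finset.HasAntidiagonal.mem_antidiagonal] at huv
  rcases eq_or_ne u 0 with hu | hu
  · subst hu
    rw [show coeff 0 p = 0 from hp]
    simp
  · have hv : v = 0 := by
      obtain ⟨k0, hk0⟩ := Finsupp.support_nonempty_iff.mpr hu
      have hk0' : u k0 ≠ 0 := Finsupp.mem_support_iff.mp hk0
      have hsum : ∀ k, u k + v k = (Finsupp.single j 1) k := fun k => by
        rw [← huv]; simp
      have hkj : k0 = j := by
        by_contra hne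
        have := hsum k0
        rw [Finsupp.single_apply, if_neg (Ne.symm hne)] at this
        omega
      subst hkj
      ext k
      simp only [Finsupp.coe_zero, Pi.zero_apply]
      by_cases hk : k = k0
      · subst hk
        have := hsum k
        rw [Finsupp.single_apply, if_pos rfl] at this
        omega
      · have := hsum k
        rw [Finsupp.single_apply, if_neg (fun h => hk h.symm)] at this
        omega
    subst hv
    rw [show coeff 0 q = 0 from hq]
    simp

/-- constant coefficient of a homogeneous polynomial of positive degree. -/
lemma constantCoeff_of_hom {a : Fin (n + 2) → ℕ} {f : S n} {d : ℕ}
    (hf : f.IsWeightedHomogeneous a d) (hd : d ≠ 0) : constantCoeff f = 0 := by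
  by_contra hc
  exact hd (by simpa using (hf (d := 0) (by simpa [constantCoeff_eq] using hc)).symm)

/-- linear coefficient vanishes off the degree. -/
lemma coeff_single_of_hom {a : Fin (n + 2) → ℕ} {f : S n} {d : ℕ}
    (hf : f.IsWeightedHomogeneous a d) {j : Fin (n + 2)} (hj : a j ≠ d) :
    coeff (Finsupp.single j 1) f = 0 := by
  by_contra hc
  exact hj (by simpa [weight_single'] using hf hc)

lemma constantCoeff_apply_monomial (φ : S n ≃ₐ[ℂ] S n)
    (h0 : ∀ j, constantCoeff (φ (X j)) = 0) {ψ : Fin (n + 2) →₀ ℕ} (hψ : ψ ≠ 0) (c : ℂ) :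
    constantCoeff (φ (monomial ψ c)) = 0 := by
  rw [monomial_eq, map_mul]
  have hC : φ (C c) = C c := by
    rw [show (C c : S n) = algebraMap ℂ (S n) c from rfl]
    exact φ.commutes c
  rw [hC, map_mul, Finsupp.prod, map_prod, map_prod]
  obtain ⟨j0, hj0⟩ := Finsupp.support_nonempty_iff.mpr hψ
  have : ∏ i ∈ ψ.support, constantCoeff (φ (X i ^ ψ i)) = 0 := by
    refine Finset.prod_eq_zero hj0 ?_
    rw [map_pow, map_pow, h0 j0]
    exact zero_pow (Finsupp.mem_support_iff.mp hj0)
  rw [this, mul_zero]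

/-- Linearization: the linear coefficients of `φ p` are given by a matrix applied to
the linear coefficients of `p`. -/
lemma coeff_single_apply (φ : S n ≃ₐ[ℂ] S n)
    (h0 : ∀ j, constantCoeff (φ (X j)) = 0) (p : S n) (k : Fin (n + 2)) :
    coeff (Finsupp.single k 1) (φ p) =
      ∑ j, coeff (Finsupp.single j 1) p * coeff (Finsupp.single k 1) (φ (X j)) := by
  induction p using MvPolynomial.induction_on' with
  | add p q hp hq =>
    rw [map_add, coeff_add, hp, hq, ← Finset.sum_add_distrib]
    simp [coeff_add, add_mul]
  | monomial ψ c =>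
    rcases eq_or_ne ψ 0 with h0' | hψ0
    · subst h0'
      rw [show (monomial 0 c : S n) = C c from (C_apply).symm,
        show φ (C c) = C c from φ.commutes c]
      have hne : ∀ (x : Fin (n+2)), ¬ (0 : Fin (n+2) →₀ ℕ) = Finsupp.single x 1 :=
        fun x h => (fun hz => (one_ne_zero (α := ℕ)) (Finsupp.single_eq_zero.mp hz)) h.symm
      rw [coeff_C, if_neg (hne k)]
      exact (Finset.sum_eq_zero fun j _ => by rw [coeff_C, if_neg (hne j), zero_mul]).symm
    · by_cases hsing : ∃ l, ψ = Finsupp.single l 1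
      · obtain ⟨l, rfl⟩ := hsing
        have hm : (monomial (Finsupp.single l 1) c : S n) = c • X l := by
          rw [show (X l : S n) = monomial (Finsupp.single l 1) 1 from rfl,
            smul_monomial, smul_eq_mul, mul_one]
        rw [Finset.sum_eq_single l]
        · rw [coeff_monomial, if_pos rfl, hm, map_smul, coeff_smul, smul_eq_mul]
        · intro j _ hj
          rw [coeff_monomial, if_neg, zero_mul]
          exact fun h => hj (Finsupp.single_left_injective one_ne_zero h).symm
        · exact fun h => absurd (Finset.mem_univ l) h
      · push_neg at hsing
        obtain ⟨j0, ψ', rfl, hψ'⟩ := exists_split hψ0 hsing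
        have hsplit : (monomial (Finsupp.single j0 1 + ψ') c : S n) =
            monomial (Finsupp.single j0 1) 1 * monomial ψ' c := by
          rw [monomial_mul, one_mul]
        rw [show φ (monomial (Finsupp.single j0 1 + ψ') c) =
            φ (monomial (Finsupp.single j0 1) 1) * φ (monomial ψ' c) from by
          rw [hsplit, map_mul]]
        rw [coeff_single_mul_zero k
          (constantCoeff_apply_monomial φ h0 (by simp [Finsupp.single_eq_zero]) 1)
          (constantCoeff_apply_monomial φ h0 hψ' c)]
        refine (Finset.sum_eq_zero fun j _ => ?_).symm
        rw [coeff_monomial, if_neg (fun h => hsing j h), zero_mul]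

lemma pow_hom {a : Fin (n + 2) → ℕ} {p : S n} {m : ℕ} (hp : p.IsWeightedHomogeneous a m)
    (k : ℕ) : (p ^ k).IsWeightedHomogeneous a (k * m) := by
  induction k with
  | zero => simpa using isWeightedHomogeneous_one _ _
  | succ k ih =>
    rw [pow_succ, Nat.succ_mul]
    exact ih.mul hp

lemma aeval_monomial_hom {a : Fin (n + 2) → ℕ} (y : Fin (n + 2) → S n)
    (hy : ∀ i, (y i).IsWeightedHomogeneous a (a i)) (ψ : Fin (n + 2) →₀ ℕ) (c : ℂ) :
    (aeval y (monomial ψ c)).IsWeightedHomogeneous a (Finsupp.weight a ψ) := by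
  rw [aeval_monomial]
  have h1 : (algebraMap ℂ (S n) c).IsWeightedHomogeneous a 0 := isWeightedHomogeneous_C _ _
  have h2 : (ψ.prod fun i k => y i ^ k).IsWeightedHomogeneous a
      (∑ i ∈ ψ.support, ψ i * a i) := by
    rw [Finsupp.prod]
    exact IsWeightedHomogeneous.prod ψ.support _ _ (fun i _ => pow_hom (hy i) (ψ i))
  have := h1.mul h2
  rw [zero_add] at this
  have hw : Finsupp.weight a ψ = ∑ i ∈ ψ.support, ψ i * a i := by
    rw [Finsupp.weight_apply]; rfl
  rw [hw]
  exact this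

lemma aeval_hom {a : Fin (n + 2) → ℕ} (y : Fin (n + 2) → S n)
    (hy : ∀ i, (y i).IsWeightedHomogeneous a (a i)) {f : S n} {d : ℕ}
    (hf : f.IsWeightedHomogeneous a d) : (aeval y f).IsWeightedHomogeneous a d := by
  rw [f.as_sum, map_sum]
  apply IsWeightedHomogeneous.sum
  intro ψ hψ
  have hw : Finsupp.weight a ψ = d := hf (MvPolynomial.mem_support_iff.mp hψ)
  exact hw ▸ aeval_monomial_hom y hy ψ _

/-- the component map commutes with substitution by homogeneous elements. -/
lemma comp_aeval {a : Fin (n + 2) → ℕ} (y : Fin (n + 2) → S n)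
    (hy : ∀ i, (y i).IsWeightedHomogeneous a (a i)) (d : ℕ) (f : S n) :
    aeval y (weightedHomogeneousComponent a d f) =
      weightedHomogeneousComponent a d (aeval y f) := by
  induction f using MvPolynomial.induction_on' with
  | add p q hp hq => simp only [map_add, hp, hq]
  | monomial ψ c =>
    have hmem : (monomial ψ c : S n) ∈ weightedHomogeneousSubmodule ℂ a (Finsupp.weight a ψ) :=
      isWeightedHomogeneous_monomial _ _ _ rfl
    have hmem2 : aeval y (monomial ψ c) ∈
        weightedHomogeneousSubmodule ℂ a (Finsupp.weight a ψ) := aeval_monomial_hom y hy ψ c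
    rw [weightedHomogeneousComponent_of_mem hmem, weightedHomogeneousComponent_of_mem hmem2]
    split_ifs with h
    · rfl
    · exact map_zero _

/-- finite-dimensionality of the weighted homogeneous pieces (positive weights). -/
lemma findim_WHS (a : Fin (n + 2) → ℕ) (ha : ∀ i, 0 < a i) (d : ℕ) :
    FiniteDimensional ℂ (weightedHomogeneousSubmodule ℂ a d : Submodule ℂ (S n)) := by
  have hfin : {ψ : Fin (n + 2) →₀ ℕ | Finsupp.weight a ψ = d}.Finite := by
    have h1 : {f : Fin (n + 2) → ℕ | ∀ j, f j ≤ d}.Finite := by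
      have : {f : Fin (n + 2) → ℕ | ∀ j, f j ≤ d} = Set.pi Set.univ fun _ => Set.Iic d := by
        ext f; simp [Set.mem_pi, Pi.le_def]
      rw [this]
      exact Set.Finite.pi fun _ => Set.finite_Iic d
    have h2 : {ψ : Fin (n + 2) →₀ ℕ | Finsupp.weight a ψ = d} ⊆
        Finsupp.equivFunOnFinite ⁻¹' {f : Fin (n + 2) → ℕ | ∀ j, f j ≤ d} := by
      intro ψ hψ j
      simp only [Set.mem_setOf_eq] at hψ
      by_cases hj : ψ j = 0
      · simp [Finsupp.equivFunOnFinite, hj]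
      · have hle : ψ j * a j ≤ Finsupp.weight a ψ := by
          rw [Finsupp.weight_apply, Finsupp.sum]
          exact Finset.single_le_sum (f := fun i => ψ i • a i)
            (fun i _ => Nat.zero_le _) (Finsupp.mem_support_iff.mpr hj)
        have : ψ j ≤ ψ j * a j := Nat.le_mul_of_pos_right _ (ha j)
        simpa [Finsupp.equivFunOnFinite] using le_trans this (hle.trans hψ.le)
    exact Set.Finite.subset (Set.Finite.preimage (Equiv.injective _).injOn h1) h2
  have hle : (weightedHomogeneousSubmodule ℂ a d : Submodule ℂ (S n)) ≤
      Submodule.span ℂ ((fun ψ => (monomial ψ (1 : ℂ) : S n)) ''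
        {ψ | Finsupp.weight a ψ = d}) := by
    intro f hf
    rw [f.as_sum]
    refine Submodule.sum_mem _ fun ψ hψ => ?_
    have : (monomial ψ (coeff ψ f) : S n) = coeff ψ f • monomial ψ 1 := by
      rw [smul_monomial, smul_eq_mul, mul_one]
    rw [this]
    exact Submodule.smul_mem _ _ (Submodule.subset_span
      ⟨ψ, hf (MvPolynomial.mem_support_iff.mp hψ), rfl⟩)
  have : FiniteDimensional ℂ (Submodule.span ℂ ((fun ψ => (monomial ψ (1 : ℂ) : S n)) ''
      {ψ | Finsupp.weight a ψ = d})) := FiniteDimensional.span_of_finite ℂ (hfin.image _)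
  exact Submodule.finiteDimensional_of_le hle

section Rep

variable (a : Fin (n + 2) → ℕ) (G : Subgroup (S n ≃ₐ[ℂ] S n))

/-- the matrix of the linear part of `g` on the variables of weight `m`. -/
def Amat (m : ℕ) (g : G) : Matrix {i : Fin (n + 2) // a i = m} {i : Fin (n + 2) // a i = m} ℂ :=
  Matrix.of fun k j => coeff (Finsupp.single k.1 1) ((g : S n ≃ₐ[ℂ] S n) (X j.1))

/-- extension by zero of a vector indexed by the weight-`m` variables. -/
def iota (m : ℕ) (w : {i : Fin (n + 2) // a i = m} → ℂ) (l : Fin (n + 2)) : ℂ :=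
  if h : a l = m then w ⟨l, h⟩ else 0

lemma iota_pos (m : ℕ) (w : {i : Fin (n + 2) // a i = m} → ℂ) {l : Fin (n + 2)}
    (h : a l = m) : iota a m w l = w ⟨l, h⟩ := dif_pos h

lemma iota_neg (m : ℕ) (w : {i : Fin (n + 2) // a i = m} → ℂ) {l : Fin (n + 2)}
    (h : ¬ a l = m) : iota a m w l = 0 := dif_neg h

variable {a G}

lemma X_hom (hG : ∀ g ∈ G, IsGradedAut a g) (g : G) (j : Fin (n + 2)) :
    (((g : S n ≃ₐ[ℂ] S n)) (X j)).IsWeightedHomogeneous a (a j) :=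
  (hG ↑g g.2 (a j) (X j)).mp (isWeightedHomogeneous_X ℂ a j)

lemma constantCoeff_X_apply (hG : ∀ g ∈ G, IsGradedAut a g) (ha : ∀ i, 0 < a i)
    (g : G) (j : Fin (n + 2)) :
    constantCoeff ((g : S n ≃ₐ[ℂ] S n) (X j)) = 0 :=
  constantCoeff_of_hom (X_hom hG g j) (ha j).ne'

lemma Amat_one (m : ℕ) : Amat a G m 1 = 1 := by
  ext k j
  have : ((1 : G) : S n ≃ₐ[ℂ] S n) (X j.1) = X j.1 := rfl
  rw [Amat, Matrix.of_apply, this, Matrix.one_apply, MvPolynomial.coeff_X']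
  by_cases h : k = j
  · subst h; rw [if_pos rfl, if_pos rfl]
  · rw [if_neg, if_neg h]
    intro hc
    exact h (Subtype.ext (Finsupp.single_left_injective (one_ne_zero (α := ℕ)) hc).symm)

lemma Amat_mul (hG : ∀ g ∈ G, IsGradedAut a g) (ha : ∀ i, 0 < a i) (m : ℕ) (g h : G) : Amat a G m (g * h) = Amat a G m g * Amat a G m h := by
  ext k j
  have hgh : ((g * h : G) : S n ≃ₐ[ℂ] S n) (X j.1) =
      (g : S n ≃ₐ[ℂ] S n) ((h : S n ≃ₐ[ℂ] S n) (X j.1)) := rfl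
  rw [Amat, Matrix.of_apply, hgh,
    coeff_single_apply (g : S n ≃ₐ[ℂ] S n) (constantCoeff_X_apply hG ha g) _ k.1]
  rw [Matrix.mul_apply]
  have hvanish : ∀ l ∈ Finset.univ, (fun l => coeff (Finsupp.single l 1)
        ((h : S n ≃ₐ[ℂ] S n) (X j.1)) *
        coeff (Finsupp.single k.1 1) ((g : S n ≃ₐ[ℂ] S n) (X l))) l ≠ 0 → a l = m := by
    intro l _ hne
    by_contra hc
    apply hne
    have : coeff (Finsupp.single l 1) ((h : S n ≃ₐ[ℂ] S n) (X j.1)) = 0 := by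
      refine coeff_single_of_hom (d := m) ?_ hc
      have := X_hom hG h j.1
      rwa [j.2] at this
    simp only [this, zero_mul]
  refine ((Finset.sum_filter_of_ne hvanish).symm.trans ?_)
  rw [Finset.sum_subtype (p := fun l => a l = m) (Finset.univ.filter fun l => a l = m)
    (by simp) (fun l => coeff (Finsupp.single l 1) ((h : S n ≃ₐ[ℂ] S n) (X j.1)) *
      coeff (Finsupp.single k.1 1) ((g : S n ≃ₐ[ℂ] S n) (X l)))]
  exact Finset.sum_congr rfl fun l _ => mul_comm _ _

/-- the linear representation of `G` on the variables of weight `m`. -/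
def fM (hG : ∀ g ∈ G, IsGradedAut a g) (ha : ∀ i, 0 < a i) (m : ℕ) :
    G →* Module.End ℂ ({i : Fin (n + 2) // a i = m} → ℂ) where
  toFun g := Matrix.toLin' (Amat a G m g)
  map_one' := by
    show Matrix.toLin' (Amat a G m 1) = 1
    rw [Amat_one, Matrix.toLin'_one]; rfl
  map_mul' g h := by
    show Matrix.toLin' (Amat a G m (g * h)) =
      Matrix.toLin' (Amat a G m g) * Matrix.toLin' (Amat a G m h)
    rw [Amat_mul hG ha, Matrix.toLin'_mul]
    rfl

lemma eigen_package [Fintype G] (hG : ∀ g ∈ G, IsGradedAut a g) (ha : ∀ i, 0 < a i)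
    (hab : ∀ g ∈ G, ∀ h ∈ G, g * h = h * g) (m : ℕ) :
    ∃ u : {i : Fin (n + 2) // a i = m} → ({i : Fin (n + 2) // a i = m} → ℂ),
      Submodule.span ℂ (Set.range u) = ⊤ ∧
      ∀ k, u k ≠ 0 ∧ ∃ χ : G → ℂ, ∀ g : G,
        Matrix.toLin' (Amat a G m g) (u k) = χ g • u k := by
  classical
  set V := ({i : Fin (n + 2) // a i = m} → ℂ)
  set fhom : G →* Module.End ℂ V := fM hG ha m with hfhom
  set f : G → Module.End ℂ V := fun g => fhom g with hf
  have hcomm : Pairwise fun g h : G => Commute (f g) (f h) := by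
    intro g h _
    have hgh : g * h = h * g := Subtype.ext (hab g.1 g.2 h.1 h.2)
    show f g * f h = f h * f g
    simp only [hf]
    rw [← map_mul, ← map_mul, hgh]
  have hN : (Fintype.card G : ℂ) ≠ 0 := by
    exact_mod_cast Fintype.card_ne_zero
  have hss : ∀ g : G, (f g).IsFinitelySemisimple := by
    intro g
    have hpow : Polynomial.aeval (f g) ((Polynomial.X : Polynomial ℂ) ^ Fintype.card G - 1) = 0 := by
      simp only [hf]
      rw [map_sub, map_pow, Polynomial.aeval_X, map_one, ← map_pow, pow_card_eq_one, map_one,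
        sub_self]
    have hsq : Squarefree ((Polynomial.X : Polynomial ℂ) ^ Fintype.card G - 1) := by
      have := (Polynomial.separable_X_pow_sub_C (1 : ℂ) hN one_ne_zero).squarefree
      rwa [map_one] at this
    exact (Module.End.isSemisimple_of_squarefree_aeval_eq_zero hsq hpow).isFinitelySemisimple
  have htop : ⨆ χ : G → ℂ, ⨅ g : G, (f g).eigenspace (χ g) = ⊤ := by
    have h1 := Module.End.iSup_iInf_maxGenEigenspace_eq_top_of_iSup_maxGenEigenspace_eq_top_of_commute
      f hcomm (fun g => Module.End.iSup_maxGenEigenspace_eq_top (f g))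
    have h2 : ∀ (g : G) (μ : ℂ), (f g).maxGenEigenspace μ = (f g).eigenspace μ :=
      fun g μ => (hss g).maxGenEigenspace_eq_eigenspace μ
    calc ⨆ χ : G → ℂ, ⨅ g : G, (f g).eigenspace (χ g)
        = ⨆ χ : G → ℂ, ⨅ g : G, (f g).maxGenEigenspace (χ g) := by
          simp_rw [h2]
      _ = ⊤ := h1
  -- the set of simultaneous eigenvectors spans
  have hspan : Submodule.span ℂ (⋃ χ : G → ℂ, (SetLike.coe (⨅ g : G, (f g).eigenspace (χ g)))) = ⊤ := by
    rw [← Submodule.iSup_eq_span, htop]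
  obtain ⟨b, hbsub, hbspan, hbind⟩ := exists_linearIndependent ℂ
    (⋃ χ : G → ℂ, (SetLike.coe (⨅ g : G, (f g).eigenspace (χ g))))
  rw [hspan] at hbspan
  let hbasis : Module.Basis b ℂ V := Module.Basis.mk hbind (by rw [Subtype.range_coe, hbspan])
  have : Fintype b := FiniteDimensional.fintypeBasisIndex hbasis
  have hcard : Fintype.card {i : Fin (n + 2) // a i = m} = Fintype.card b := by
    rw [← Module.finrank_fintype_fun_eq_card ℂ, Module.finrank_eq_card_basis hbasis]
  obtain e := Fintype.equivOfCardEq hcard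
  refine ⟨fun k => (e k : V), ?_, ?_⟩
  · have : Set.range (fun k => (e k : V)) = b := by
      rw [show (fun k => (e k : V)) = Subtype.val ∘ e from rfl, Set.range_comp,
        Equiv.range_eq_univ, Set.image_univ, Subtype.range_coe]
    rw [this, hbspan]
  · intro k
    constructor
    · exact hbind.ne_zero (e k)
    · have hmem : ((e k : V)) ∈ ⋃ χ : G → ℂ, (SetLike.coe (⨅ g : G, (f g).eigenspace (χ g))) :=
        hbsub (e k).2
      rw [Set.mem_iUnion] at hmem
      obtain ⟨χ, hχ⟩ := hmem
      refine ⟨χ, fun g => ?_⟩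
      have : (e k : V) ∈ (f g).eigenspace (χ g) := by
        have := Submodule.mem_iInf (fun g : G => (f g).eigenspace (χ g)) |>.mp hχ
        exact this g
      exact Module.End.mem_eigenspace_iff.mp this

/-- The main package: for each weight `m`, a family of homogeneous eigen-polynomials whose
linear coefficient vectors span the weight-`m` coordinate space. -/
lemma package [Fintype G] (hG : ∀ g ∈ G, IsGradedAut a g) (ha : ∀ i, 0 < a i)
    (hab : ∀ g ∈ G, ∀ h ∈ G, g * h = h * g) :
    ∃ (Y : ∀ m : ℕ, {i : Fin (n + 2) // a i = m} → S n)
      (U : ∀ m : ℕ, {i : Fin (n + 2) // a i = m} → (Fin (n + 2) → ℂ)),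
      (∀ m k, (Y m k).IsWeightedHomogeneous a m) ∧
      (∀ m k, ∃ χ : G → ℂ, ∀ g : G, (g : S n ≃ₐ[ℂ] S n) (Y m k) = χ g • Y m k) ∧
      (∀ m k j, coeff (Finsupp.single j 1) (Y m k) = U m k j) ∧
      (∀ j : Fin (n + 2), ∃ c : {i : Fin (n + 2) // a i = a j} → ℂ,
        ∑ k, c k • U (a j) k = Pi.single j 1) := by
  classical
  choose u hspan hker using fun m => eigen_package hG ha hab m
  have hne : ∀ m k, u m k ≠ 0 := fun m k => (hker m k).1
  choose χ hχ using fun m k => (hker m k).2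
  -- multiplicativity of the characters
  have hcoord : ∀ m k, ∃ co, u m k co ≠ 0 := fun m k => Function.ne_iff.mp (hne m k)
  have hχone : ∀ m k, χ m k 1 = 1 := by
    intro m k
    obtain ⟨co, hco⟩ := hcoord m k
    have h1 := hχ m k 1
    rw [Amat_one, Matrix.toLin'_one] at h1
    have := congrFun h1 co
    simp only [LinearMap.id_apply, Pi.smul_apply, smul_eq_mul] at this
    field_simp at this
    tauto
  have hχmul : ∀ m k g h, χ m k (g * h) = χ m k g * χ m k h := by
    intro m k g h
    obtain ⟨co, hco⟩ := hcoord m k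
    have h1 := hχ m k (g * h)
    rw [Amat_mul hG ha, Matrix.toLin'_mul] at h1
    have h2 : Matrix.toLin' (Amat a G m g) (Matrix.toLin' (Amat a G m h) (u m k)) =
        (χ m k g * χ m k h) • u m k := by
      rw [hχ m k h, map_smul, hχ m k g, smul_smul, mul_comm]
    rw [LinearMap.comp_apply, h2] at h1
    have := congrFun h1 co
    simp only [Pi.smul_apply, smul_eq_mul] at this
    exact (mul_right_cancel₀ hco this).symm
  have hχne : ∀ m k g, χ m k g ≠ 0 := by
    intro m k g
    have : χ m k g * χ m k g⁻¹ = 1 := by rw [← hχmul, mul_inv_cancel, hχone]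
    exact left_ne_zero_of_mul_eq_one this
  set N := Fintype.card G with hN
  have hNne : (N : ℂ) ≠ 0 := by exact_mod_cast Fintype.card_ne_zero
  refine ⟨fun m k => (N : ℂ)⁻¹ • ∑ g : G, (χ m k g)⁻¹ •
      (g : S n ≃ₐ[ℂ] S n) (∑ j, iota a m (u m k) j • X j),
    fun m k => iota a m (u m k), ?_, ?_, ?_, ?_⟩
  · -- homogeneity
    intro m k
    rw [← mem_weightedHomogeneousSubmodule]
    refine Submodule.smul_mem _ _ (Submodule.sum_mem _ fun g _ => Submodule.smul_mem _ _ ?_)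
    rw [mem_weightedHomogeneousSubmodule]
    refine (hG ↑g g.2 m _).mp ?_
    rw [← mem_weightedHomogeneousSubmodule]
    refine Submodule.sum_mem _ fun j _ => ?_
    by_cases hj : a j = m
    · refine Submodule.smul_mem _ _ ?_
      rw [mem_weightedHomogeneousSubmodule, ← hj]
      exact isWeightedHomogeneous_X ℂ a j
    · rw [iota_neg a m _ hj, zero_smul]
      exact Submodule.zero_mem _
  · -- eigenvector property
    intro m k
    refine ⟨χ m k, fun g => ?_⟩
    rw [map_smul, map_sum]
    have hterm : ∀ h : G, (g : S n ≃ₐ[ℂ] S n) ((χ m k h)⁻¹ •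
        (h : S n ≃ₐ[ℂ] S n) (∑ j, iota a m (u m k) j • X j)) =
        χ m k g • ((χ m k (g * h))⁻¹ •
          ((g * h : G) : S n ≃ₐ[ℂ] S n) (∑ j, iota a m (u m k) j • X j)) := by
      intro h
      rw [map_smul]
      have hmulap : ((g * h : G) : S n ≃ₐ[ℂ] S n) (∑ j, iota a m (u m k) j • X j) =
          (g : S n ≃ₐ[ℂ] S n) ((h : S n ≃ₐ[ℂ] S n) (∑ j, iota a m (u m k) j • X j)) := rfl
      rw [hmulap, smul_smul]
      congr 1
      rw [hχmul]
      field_simp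
      rw [div_eq_div_iff (hχne m k h) (mul_ne_zero (hχne m k h) (hχne m k g))]
      ring
    rw [Finset.sum_congr rfl fun h _ => hterm h, ← Finset.smul_sum]
    rw [show (∑ h : G, (χ m k (g * h))⁻¹ •
        ((g * h : G) : S n ≃ₐ[ℂ] S n) (∑ j, iota a m (u m k) j • X j)) =
        ∑ h : G, (χ m k h)⁻¹ • (h : S n ≃ₐ[ℂ] S n) (∑ j, iota a m (u m k) j • X j) from
      Fintype.sum_equiv (Equiv.mulLeft g) _ _ (fun h => rfl)]
    rw [smul_comm]
  · -- linear coefficients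
    intro m k j'
    have hp0 : ∀ l, coeff (Finsupp.single l 1) (∑ j, iota a m (u m k) j • X j) =
        iota a m (u m k) l := by
      intro l
      rw [coeff_sum]
      rw [Finset.sum_eq_single l]
      · rw [coeff_smul, MvPolynomial.coeff_X', if_pos rfl, smul_eq_mul, mul_one]
      · intro j _ hj
        rw [coeff_smul, MvPolynomial.coeff_X', if_neg, smul_eq_mul, mul_zero]
        exact fun hc => hj (Finsupp.single_left_injective (one_ne_zero (α := ℕ)) hc)
      · exact fun hl => absurd (Finset.mem_univ l) hl
    have hkey : ∀ g : G, coeff (Finsupp.single j' 1)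
        ((g : S n ≃ₐ[ℂ] S n) (∑ j, iota a m (u m k) j • X j)) =
        χ m k g * iota a m (u m k) j' := by
      intro g
      rw [coeff_single_apply (g : S n ≃ₐ[ℂ] S n) (constantCoeff_X_apply hG ha g)]
      by_cases hj' : a j' = m
      · rw [Finset.sum_congr rfl fun l _ => by rw [hp0 l]]
        have hvanish : ∀ l ∈ Finset.univ, (fun l => iota a m (u m k) l *
            coeff (Finsupp.single j' 1) ((g : S n ≃ₐ[ℂ] S n) (X l))) l ≠ 0 → a l = m := by
          intro l _ hnz
          by_contra hc
          exact hnz (by simp only [iota_neg a m _ hc, zero_mul])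
        rw [← Finset.sum_filter_of_ne hvanish]
        rw [Finset.sum_subtype (p := fun l => a l = m) (Finset.univ.filter fun l => a l = m)
          (by simp) (fun l => iota a m (u m k) l *
            coeff (Finsupp.single j' 1) ((g : S n ≃ₐ[ℂ] S n) (X l)))]
        have heig := congrFun (hχ m k g) ⟨j', hj'⟩
        rw [Matrix.toLin'_apply] at heig
        simp only [Pi.smul_apply, smul_eq_mul] at heig
        rw [iota_pos a m _ hj', ← heig]
        rw [Matrix.mulVec, dotProduct]
        refine Finset.sum_congr rfl fun l _ => ?_
        rw [iota_pos a m _ l.2]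
        rw [Amat, Matrix.of_apply, mul_comm]
      · rw [iota_neg a m _ hj', mul_zero]
        refine Finset.sum_eq_zero fun l _ => ?_
        by_cases hl : a l = m
        · have : coeff (Finsupp.single j' 1) ((g : S n ≃ₐ[ℂ] S n) (X l)) = 0 := by
            refine coeff_single_of_hom (X_hom hG g l) ?_
            rw [hl]; exact hj'
          rw [this, mul_zero]
        · rw [hp0 l, iota_neg a m _ hl, zero_mul]
    rw [coeff_smul, coeff_sum]
    rw [Finset.sum_congr rfl fun g _ => by
      rw [coeff_smul, hkey g, smul_eq_mul, inv_mul_cancel_left₀ (hχne m k g)]]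
    rw [Finset.sum_const, Finset.card_univ, smul_eq_mul, nsmul_eq_mul]
    rw [← mul_assoc, inv_mul_cancel₀ hNne, one_mul]
  · -- spanning
    intro j
    have hmem : Pi.single (⟨j, rfl⟩ : {i : Fin (n + 2) // a i = a j}) (1 : ℂ) ∈
        Submodule.span ℂ (Set.range (u (a j))) := by
      rw [hspan (a j)]; exact Submodule.mem_top
    obtain ⟨c, hc⟩ := (Submodule.mem_span_range_iff_exists_fun ℂ).mp hmem
    refine ⟨c, ?_⟩
    funext l
    rw [Finset.sum_apply]
    by_cases hl : a l = a j
    · have h1 := congrFun hc ⟨l, hl⟩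
      rw [Finset.sum_apply] at h1
      simp only [Pi.smul_apply, smul_eq_mul] at h1 ⊢
      rw [Finset.sum_congr rfl fun k _ => by rw [iota_pos a (a j) _ hl]]
      rw [h1]
      rw [Pi.single_apply, Pi.single_apply]
      congr 1
      simp [Subtype.ext_iff]
    · rw [Finset.sum_congr rfl fun k _ => by
        simp only [Pi.smul_apply, smul_eq_mul]
        rw [iota_neg a (a j) _ hl, mul_zero]]
      rw [Finset.sum_const_zero, Pi.single_apply, if_neg (fun hc' => hl (by rw [hc']))]

lemma sum_dite_subtype {α : Type*} [Fintype α] {p : α → Prop} [DecidablePred p]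
    (F : {i : α // p i} → ℂ) :
    (∑ i : α, if h : p i then F ⟨i, h⟩ else 0) = ∑ k : {i : α // p i}, F k := by
  rw [← Finset.sum_filter_of_ne (fun i _ hne => by
    by_contra hc; exact hne (dif_neg hc))]
  rw [Finset.sum_subtype (p := p) _ (by simp) (fun i => if h : p i then F ⟨i, h⟩ else 0)]
  exact Finset.sum_congr rfl fun k _ => by rw [dif_pos k.2]

end Rep

end DiagAux

/-- A finite abelian group of graded automorphisms of the weighted
polynomial ring is diagonalizable: after conjugating by a graded automorphism `γ`,
every element sends each variable `x_i` to a scalar multiple of itself. -/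
theorem finite_abelian_diagonalizable {n : ℕ} (a : Fin (n + 2) → ℕ) (ha : ∀ i, 0 < a i)
    (G : Subgroup (MvPolynomial (Fin (n + 2)) ℂ ≃ₐ[ℂ] MvPolynomial (Fin (n + 2)) ℂ))
    (hG : ∀ g ∈ G, IsGradedAut a g) (hfin : Finite G)
    (hab : ∀ g ∈ G, ∀ h ∈ G, g * h = h * g) :
    ∃ γ : MvPolynomial (Fin (n + 2)) ℂ ≃ₐ[ℂ] MvPolynomial (Fin (n + 2)) ℂ,
      IsGradedAut a γ ∧
      ∀ g ∈ G, ∀ i : Fin (n + 2), ∃ c : ℂ, (γ * g * γ⁻¹) (X i) = c • X i := by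

  classical
  have : Fintype G := Fintype.ofFinite _
  obtain ⟨Y, U, hYhom, hYeig, hYcoeff, hUspan⟩ := DiagAux.package hG ha hab
  have Ucast : ∀ (i : Fin (n + 2)) (m : ℕ) (h : a i = m), U m ⟨i, h⟩ = U (a i) ⟨i, rfl⟩ := by
    intro i m h; subst h; rfl
  set y : Fin (n + 2) → DiagAux.S n := fun i => Y (a i) ⟨i, rfl⟩ with hy
  have hyhom : ∀ i, (y i).IsWeightedHomogeneous a (a i) := fun i => hYhom _ _
  have hycoeff : ∀ i j, coeff (Finsupp.single j 1) (y i) = U (a i) ⟨i, rfl⟩ j :=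
    fun i j => hYcoeff _ _ _
  set γ' : DiagAux.S n →ₐ[ℂ] DiagAux.S n := aeval y with hγ'
  have hγ'X : ∀ i, γ' (X i) = y i := fun i => aeval_X y i
  -- a homogeneous element of the range with prescribed linear part
  have hz : ∀ j : Fin (n + 2), ∃ z : DiagAux.S n, z ∈ γ'.range ∧ z.IsWeightedHomogeneous a (a j) ∧
      ∀ l, coeff (Finsupp.single l 1) z = (Pi.single j 1 : Fin (n + 2) → ℂ) l := by
    intro j
    obtain ⟨c, hc⟩ := hUspan j
    refine ⟨∑ i : Fin (n + 2), (if h : a i = a j then c ⟨i, h⟩ else 0) • y i, ?_, ?_, ?_⟩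
    · exact Subalgebra.sum_mem _ fun i _ =>
        Subalgebra.smul_mem _ ((AlgHom.mem_range γ').mpr ⟨X i, hγ'X i⟩) _
    · rw [← mem_weightedHomogeneousSubmodule]
      refine Submodule.sum_mem _ fun i _ => ?_
      by_cases h : a i = a j
      · rw [dif_pos h]
        refine Submodule.smul_mem _ _ ?_
        rw [mem_weightedHomogeneousSubmodule, ← h]
        exact hyhom i
      · rw [dif_neg h, zero_smul]; exact Submodule.zero_mem _
    · intro l
      rw [coeff_sum]
      have hterm : ∀ i, coeff (Finsupp.single l 1) ((if h : a i = a j then c ⟨i, h⟩ else 0) • y i)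
          = (if h : a i = a j then c ⟨i, h⟩ * U (a j) ⟨i, h⟩ l else 0) := by
        intro i
        rw [coeff_smul, smul_eq_mul]
        by_cases h : a i = a j
        · rw [dif_pos h, dif_pos h, hycoeff i l, Ucast i (a j) h]
        · rw [dif_neg h, dif_neg h, zero_mul]
      rw [Finset.sum_congr rfl fun i _ => hterm i]
      rw [DiagAux.sum_dite_subtype (fun k : {i : Fin (n + 2) // a i = a j} => c k * U (a j) k l)]
      have h1 := congrFun hc l
      rw [Finset.sum_apply] at h1
      simp only [Pi.smul_apply, smul_eq_mul] at h1
      exact h1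
  -- surjectivity on monomials by strong induction on the weight
  have hmono : ∀ w : ℕ, ∀ ψ : Fin (n + 2) →₀ ℕ, Finsupp.weight a ψ = w →
      (monomial ψ (1 : ℂ)) ∈ γ'.range := by
    intro w
    induction w using Nat.strong_induction_on with
    | _ w IH =>
    have hdec : ∀ ψ : Fin (n + 2) →₀ ℕ, Finsupp.weight a ψ = w → ψ ≠ 0 →
        (∀ l, ψ ≠ Finsupp.single l 1) → (monomial ψ (1 : ℂ)) ∈ γ'.range := by
      intro ψ hw h0 h1
      obtain ⟨j0, ψ', rfl, hψ'⟩ := DiagAux.exists_split h0 h1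
      have hsplit : (monomial (Finsupp.single j0 1 + ψ') (1 : ℂ)) =
          monomial (Finsupp.single j0 1) 1 * monomial ψ' 1 := by
        rw [monomial_mul, one_mul]
      rw [hsplit]
      have hwadd : Finsupp.weight a (Finsupp.single j0 1 + ψ') =
          a j0 + Finsupp.weight a ψ' := by rw [map_add, DiagAux.weight_single']
      rw [hwadd] at hw
      have hwp := DiagAux.weight_pos a ha hψ'
      have hap := ha j0
      have hlt1 : a j0 < w := by omega
      have hlt2 : Finsupp.weight a ψ' < w := by omega
      exact mul_mem (IH (a j0) hlt1 (Finsupp.single j0 1) (DiagAux.weight_single' a j0))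
        (IH (Finsupp.weight a ψ') hlt2 ψ' rfl)
    intro ψ hw
    rcases eq_or_ne ψ 0 with rfl | h0
    · rw [show (monomial 0 (1 : ℂ) : DiagAux.S n) = 1 from by
        rw [show (monomial 0 (1:ℂ) : DiagAux.S n) = C 1 from (C_apply).symm, C_1]]
      exact one_mem _
    · by_cases h1 : ∃ l, ψ = Finsupp.single l 1
      · obtain ⟨l, rfl⟩ := h1
        obtain ⟨z, hzr, hzh, hzc⟩ := hz l
        have hwl : w = a l := by rw [← hw, DiagAux.weight_single']
        have hq : (X l - z).IsWeightedHomogeneous a (a l) := by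
          rw [← mem_weightedHomogeneousSubmodule] at hzh ⊢
          exact Submodule.sub_mem _ (isWeightedHomogeneous_X ℂ a l) hzh
        have hqlin : ∀ l', coeff (Finsupp.single l' 1) (X l - z) = 0 := by
          intro l'
          rw [coeff_sub, hzc l', MvPolynomial.coeff_X', Pi.single_apply]
          by_cases h : l' = l
          · subst h; rw [if_pos rfl, if_pos rfl, sub_self]
          · rw [if_neg (fun hc =>
              h (Finsupp.single_left_injective (one_ne_zero (α := ℕ)) hc).symm),
              if_neg h, sub_zero]
        have hq0 : constantCoeff (X l - z) = 0 := DiagAux.constantCoeff_of_hom hq (ha l).ne'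
        have hqr : (X l - z) ∈ γ'.range := by
          have hq_as := MvPolynomial.as_sum (X l - z)
          rw [hq_as]
          refine Subalgebra.sum_mem _ fun ψ' hψ' => ?_
          have hcne := MvPolynomial.mem_support_iff.mp hψ'
          have hwψ' : Finsupp.weight a ψ' = w := by rw [hwl]; exact hq hcne
          have hψ'0 : ψ' ≠ 0 := by
            rintro rfl
            exact hcne (by rw [← constantCoeff_eq]; exact hq0)
          have hψ's : ∀ l', ψ' ≠ Finsupp.single l' 1 := by
            rintro l' rfl
            exact hcne (hqlin l')
          rw [show (monomial ψ' (coeff ψ' (X l - z)) : DiagAux.S n) =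
            coeff ψ' (X l - z) • monomial ψ' 1 from by
              rw [smul_monomial, smul_eq_mul, mul_one]]
          exact Subalgebra.smul_mem _ (hdec ψ' hwψ' hψ'0 hψ's) _
        rw [show (monomial (Finsupp.single l 1) (1 : ℂ) : DiagAux.S n) = (X l - z) + z from by
          rw [show (monomial (Finsupp.single l 1) (1 : ℂ) : DiagAux.S n) = X l from rfl]; ring]
        exact add_mem hqr hzr
      · push_neg at h1
        exact hdec ψ hw h0 h1
  have hsurj : Function.Surjective γ' := by
    intro f
    have hf : f ∈ γ'.range := by
      have hf_as := MvPolynomial.as_sum f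
      rw [hf_as]
      refine Subalgebra.sum_mem _ fun ψ hψ => ?_
      rw [show (monomial ψ (coeff ψ f) : DiagAux.S n) = coeff ψ f • monomial ψ 1 from by
        rw [smul_monomial, smul_eq_mul, mul_one]]
      exact Subalgebra.smul_mem _ (hmono _ ψ rfl) _
    exact (AlgHom.mem_range γ').mp hf
  -- injectivity degree by degree
  have hFD : ∀ d : ℕ, FiniteDimensional ℂ
      (weightedHomogeneousSubmodule ℂ a d : Submodule ℂ (DiagAux.S n)) := DiagAux.findim_WHS a ha
  have hmapsTo : ∀ d : ℕ, Set.MapsTo γ' (weightedHomogeneousSubmodule ℂ a d)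
      (weightedHomogeneousSubmodule ℂ a d) := fun d f hf => DiagAux.aeval_hom y hyhom hf
  have hTd_surj : ∀ d, Function.Surjective (γ'.toLinearMap.restrict (hmapsTo d)) := by
    rintro d ⟨f, hf⟩
    obtain ⟨h, hh⟩ := hsurj f
    refine ⟨⟨weightedHomogeneousComponent a d h,
      weightedHomogeneousComponent_mem a h d⟩, ?_⟩
    apply Subtype.ext
    show γ' (weightedHomogeneousComponent a d h) = f
    rw [DiagAux.comp_aeval y hyhom d h, hh]
    exact IsWeightedHomogeneous.weightedHomogeneousComponent_same hf
  have hTd_inj : ∀ d, Function.Injective (γ'.toLinearMap.restrict (hmapsTo d)) := by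
    intro d
    have := hFD d
    exact (LinearMap.injective_iff_surjective).mpr (hTd_surj d)
  have hker : ∀ h : DiagAux.S n, γ' h = 0 → h = 0 := by
    intro h hh
    have hcomp0 : ∀ d, weightedHomogeneousComponent a d h = 0 := by
      intro d
      have h1 : γ' (weightedHomogeneousComponent a d h) = 0 := by
        rw [DiagAux.comp_aeval y hyhom d h, hh, map_zero]
      have h2 : (γ'.toLinearMap.restrict (hmapsTo d)) ⟨weightedHomogeneousComponent a d h,
          weightedHomogeneousComponent_mem a h d⟩ = 0 := by
        apply Subtype.ext
        exact h1
      have h3 := hTd_inj d (h2.trans (map_zero _).symm)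
      exact Subtype.ext_iff.mp h3
    have hsum := sum_weightedHomogeneousComponent a h
    rw [← hsum]
    simp only [hcomp0]
    exact finsum_zero
  have hinj : Function.Injective γ' := by
    intro p q hpq
    have h1 : γ' (p - q) = 0 := by rw [map_sub, hpq, sub_self]
    exact sub_eq_zero.mp (hker _ h1)
  set γ'' : DiagAux.S n ≃ₐ[ℂ] DiagAux.S n := AlgEquiv.ofBijective γ' ⟨hinj, hsurj⟩ with hγ''
  have hγ''_apply : ∀ f, γ'' f = γ' f := fun f => rfl
  have hgr : IsGradedAut a γ'' := by
    intro d f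
    constructor
    · intro hf
      rw [hγ''_apply]
      exact DiagAux.aeval_hom y hyhom hf
    · intro hf
      rw [hγ''_apply] at hf
      have hcomps : ∀ e, e ≠ d → weightedHomogeneousComponent a e f = 0 := by
        intro e he
        apply hker
        rw [DiagAux.comp_aeval y hyhom e f]
        exact IsWeightedHomogeneous.weightedHomogeneousComponent_ne e hf he
      have hsum := sum_weightedHomogeneousComponent a f
      have heq : (finsum fun m => weightedHomogeneousComponent a m f) =
          weightedHomogeneousComponent a d f :=
        finsum_eq_single _ d (fun e he => hcomps e he)
      rw [← hsum, heq]
      exact weightedHomogeneousComponent_isWeightedHomogeneous d f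
  refine ⟨γ''⁻¹, hgr.inv, ?_⟩
  intro g hg i
  obtain ⟨χ, hχ⟩ := hYeig (a i) ⟨i, rfl⟩
  refine ⟨χ ⟨g, hg⟩, ?_⟩
  have h1 : (γ''⁻¹ * g * γ''⁻¹⁻¹) (X i) = γ''⁻¹ (g (γ'' (X i))) := by
    rw [inv_inv]
    rfl
  have h2 : γ'' (X i) = y i := by rw [hγ''_apply, hγ'X]
  have h4 : γ''⁻¹ = γ''.symm := rfl
  have h3 : γ''⁻¹ (y i) = X i := by
    rw [h4, ← h2, AlgEquiv.symm_apply_apply]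
  rw [h1, h2, show g (y i) = χ ⟨g, hg⟩ • y i from hχ ⟨g, hg⟩, map_smul, h3]


end
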